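/- (Bordered Hessian criterion) Let B be a symmetric n×n real matrix and A an M×n real matrix with M ≤ n. The (n+M)×(n+M) block matrix H = [[B, Aᵀ],[A, 0]] is invertible if and only if A has rank M and the bilinear form (w, w') ↦ wᵀBw' is nondegenerate on the kernel of A (i.e., for every nonzero w ∈ ker A there exists w' ∈ ker A with wᵀBw' ≠ 0). -/

import Mathlib

open Matrix

/-- Fredholm alternative for real matrices: if `v` is orthogonal to the kernel of `A`,
then `v` is in the range of `Aᵀ`. -/
lemma fredholm_aux {n M : ℕ} (A : Matrix (Fin M) (Fin n) ℝ) (v : Fin n → ℝ)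
    (h : ∀ u, A *ᵥ u = 0 → v ⬝ᵥ u = 0) :
    ∃ lam : Fin M → ℝ, Aᵀ *ᵥ lam = v := by
  classical
  set C : Matrix (Fin M ⊕ Unit) (Fin n) ℝ := Matrix.of (Sum.elim A fun _ => v) with hCdef
  have hker : LinearMap.ker C.mulVecLin = LinearMap.ker A.mulVecLin := by
    ext u
    simp only [LinearMap.mem_ker, Matrix.mulVecLin_apply]
    constructor
    · intro hu
      funext i
      exact congrFun hu (Sum.inl i)
    · intro hu
      funext i
      cases i with
      | inl i => exact congrFun hu i
      | inr i => exact h u hu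
  have hrank : C.rank = A.rank := by
    have h1 := LinearMap.finrank_range_add_finrank_ker C.mulVecLin
    have h2 := LinearMap.finrank_range_add_finrank_ker A.mulVecLin
    rw [hker] at h1
    rw [Matrix.rank, Matrix.rank]
    omega
  have hspan : Submodule.span ℝ (Set.range A) = Submodule.span ℝ (Set.range C) := by
    apply Submodule.eq_of_le_of_finrank_le
    · exact Submodule.span_mono (by rintro x ⟨i, rfl⟩; exact ⟨Sum.inl i, rfl⟩)
    · change Module.finrank ℝ (Submodule.span ℝ (Set.range C.row)) ≤
        Module.finrank ℝ (Submodule.span ℝ (Set.range A.row))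
      rw [← Matrix.rank_eq_finrank_span_row, ← Matrix.rank_eq_finrank_span_row, hrank]
  have hv : v ∈ Submodule.span ℝ (Set.range A) := by
    rw [hspan]
    exact Submodule.subset_span ⟨Sum.inr (), rfl⟩
  have : v ∈ LinearMap.range Aᵀ.mulVecLin := by
    rw [Matrix.range_mulVecLin]
    exact hv
  exact this

/-- Bordered Hessian criterion: for a symmetric `n×n` matrix `B` and an `M×n`
matrix `A` with `M ≤ n`, the bordered matrix `H = [[B, Aᵀ],[A, 0]]` is invertible iff `A` has
rank `M` and the bilinear form `(w, w') ↦ wᵀ B w'` is nondegenerate on `ker A`. -/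
theorem stmt_10 (n M : ℕ) (hMn : M ≤ n)
    (B : Matrix (Fin n) (Fin n) ℝ) (hB : B.IsSymm)
    (A : Matrix (Fin M) (Fin n) ℝ) :
    IsUnit (Matrix.fromBlocks B Aᵀ A 0).det ↔
      (A.rank = M ∧
        ∀ w : Fin n → ℝ, A.mulVec w = 0 → w ≠ 0 →
          ∃ w' : Fin n → ℝ, A.mulVec w' = 0 ∧ w ⬝ᵥ B.mulVec w' ≠ 0) := by
  classical
  have hdet : IsUnit (fromBlocks B Aᵀ A 0).det ↔
      ∀ x : Fin n ⊕ Fin M → ℝ, (fromBlocks B Aᵀ A 0) *ᵥ x = 0 → x = 0 := by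
    rw [isUnit_iff_ne_zero, Ne, ← Matrix.exists_mulVec_eq_zero_iff]
    push_neg
    constructor
    · intro h x hx
      by_contra hx0
      exact h x hx0 hx
    · intro h x hx0 hx
      exact hx0 (h x hx)
  have hmul : ∀ (w : Fin n → ℝ) (lam : Fin M → ℝ),
      (fromBlocks B Aᵀ A 0) *ᵥ Sum.elim w lam = Sum.elim (B *ᵥ w + Aᵀ *ᵥ lam) (A *ᵥ w) := by
    intro w lam
    rw [Matrix.fromBlocks_mulVec]
    simp
  have hsymm : ∀ w u : Fin n → ℝ, w ⬝ᵥ B *ᵥ u = (B *ᵥ w) ⬝ᵥ u := by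
    intro w u
    rw [Matrix.dotProduct_mulVec, ← Matrix.mulVec_transpose, hB.eq]
  have hdp : ∀ (lam : Fin M → ℝ) (w' : Fin n → ℝ), (Aᵀ *ᵥ lam) ⬝ᵥ w' = lam ⬝ᵥ (A *ᵥ w') := by
    intro lam w'
    rw [Matrix.dotProduct_mulVec, ← Matrix.mulVec_transpose]
  rw [hdet]
  constructor
  · intro h
    constructor
    · have hinj : ∀ lam : Fin M → ℝ, Aᵀ *ᵥ lam = 0 → lam = 0 := by
        intro lam hlam
        have h0 : (fromBlocks B Aᵀ A 0) *ᵥ Sum.elim (0 : Fin n → ℝ) lam = 0 := by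
          rw [hmul]
          simp [hlam]
        have := h _ h0
        funext i
        exact congrFun this (Sum.inr i)
      have hinj' : Function.Injective Aᵀ.mulVecLin := by
        rw [← LinearMap.ker_eq_bot, Matrix.ker_mulVecLin_eq_bot_iff]
        exact hinj
      have hr : Aᵀ.rank = M := by
        rw [Matrix.rank, LinearMap.finrank_range_of_inj hinj']
        simp
      rw [← Matrix.rank_transpose]
      exact hr
    · intro w hw hw0
      by_contra hcon
      push_neg at hcon
      have hv : ∀ u, A *ᵥ u = 0 → (B *ᵥ w) ⬝ᵥ u = 0 := by
        intro u hu
        rw [← hsymm]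
        exact hcon u hu
      obtain ⟨lam, hlam⟩ := fredholm_aux A (B *ᵥ w) hv
      have h0 : (fromBlocks B Aᵀ A 0) *ᵥ Sum.elim w (-lam) = 0 := by
        rw [hmul]
        have h1 : B *ᵥ w + Aᵀ *ᵥ (-lam) = 0 := by
          rw [Matrix.mulVec_neg, hlam]
          simp
        rw [h1, hw]
        simp
      exact hw0 (funext fun i => congrFun (h _ h0) (Sum.inl i))
  · rintro ⟨hrank, hnd⟩ x hx
    set w := x ∘ Sum.inl with hwdef
    set lam := x ∘ Sum.inr with hlamdef
    have hx' : (fromBlocks B Aᵀ A 0) *ᵥ Sum.elim w lam = 0 := by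
      rwa [Sum.elim_comp_inl_inr]
    rw [hmul] at hx'
    have h1 : B *ᵥ w + Aᵀ *ᵥ lam = 0 := funext fun i => congrFun hx' (Sum.inl i)
    have h2 : A *ᵥ w = 0 := funext fun i => congrFun hx' (Sum.inr i)
    have hw0 : w = 0 := by
      by_contra hw0
      obtain ⟨w', hw', hne⟩ := hnd w h2 hw0
      apply hne
      rw [hsymm, eq_neg_of_add_eq_zero_left h1, neg_dotProduct, hdp, hw', dotProduct_zero,
        neg_zero]
    have hlam0 : Aᵀ *ᵥ lam = 0 := by
      rw [hw0, Matrix.mulVec_zero, zero_add] at h1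
      exact h1
    have hlamz : lam = 0 := by
      have hrT : Aᵀ.rank = M := by rw [Matrix.rank_transpose]; exact hrank
      have hfr := LinearMap.finrank_range_add_finrank_ker Aᵀ.mulVecLin
      have hM : Module.finrank ℝ (Fin M → ℝ) = M := by simp
      rw [hM] at hfr
      have hk0 : Module.finrank ℝ (LinearMap.ker Aᵀ.mulVecLin) = 0 := by
        have : Aᵀ.rank + Module.finrank ℝ (LinearMap.ker Aᵀ.mulVecLin) = M := by
          rw [Matrix.rank]; exact hfr
        omega
      have hkbot : LinearMap.ker Aᵀ.mulVecLin = ⊥ := Submodule.finrank_eq_zero.mp hk0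
      have : lam ∈ LinearMap.ker Aᵀ.mulVecLin := by
        simp only [LinearMap.mem_ker, Matrix.mulVecLin_apply]
        exact hlam0
      rw [hkbot] at this
      simpa using this
    funext i
    cases i with
    | inl i => exact congrFun hw0 i
    | inr i => exact congrFun hlamz i
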